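/- Let Γ be a nonempty set and let N be an equivalent norm on c₀(Γ) that is solid, strictly monotone, and normalized (N(e_γ) = 1 for all γ ∈ Γ). Let L := sup{ N(1_A) : A a nonempty finite subset of Γ }, where 1_A ∈ c₀(Γ) is the indicator function of A. If there exist α ∈ Γ and l > 1 such that N(e_α + (1/L)·e_β) ≥ l for every β ∈ Γ with β ≠ α, then N fails the local diameter two property: there exist a linear functional f : c₀(Γ) → ℝ with sup{ f(x) : N(x) ≤ 1 } = 1, a δ > 0, and a d < 2, such that N(u − v) ≤ d whenever N(u) ≤ 1, N(v) ≤ 1, f(u) > 1 − δ and f(v) > 1 − δ. -/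

import Mathlib

open Classical in
/-- The unit vector (indicator of `{γ}`) in the space of real functions on `Γ`. -/
noncomputable def eVec {Γ : Type*} (γ : Γ) : Γ → ℝ := fun δ => if δ = γ then 1 else 0

open Classical in
/-- The indicator function of a finite subset `A` of `Γ`. -/
noncomputable def indFinset {Γ : Type*} (A : Finset Γ) : Γ → ℝ :=
  fun γ => if γ ∈ A then 1 else 0

/-- Membership in `c₀(Γ)`: functions vanishing at infinity. -/
def IsC0 {Γ : Type*} (x : Γ → ℝ) : Prop := ∀ ε : ℝ, 0 < ε → {γ | ε ≤ |x γ|}.Finite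

/-- The supremum norm of a function on `Γ`. -/
noncomputable def supNorm {Γ : Type*} (x : Γ → ℝ) : ℝ := ⨆ γ, |x γ|

section Helpers
variable {Γ : Type*}

lemma isC0_of_finiteSupport {x : Γ → ℝ} (h : (Function.support x).Finite) : IsC0 x := by
  intro ε hε
  refine h.subset fun γ hγ => ?_
  simp only [Function.mem_support]
  intro h0
  simp only [Set.mem_setOf_eq, h0, abs_zero] at hγ
  linarith

lemma isC0_smul {x : Γ → ℝ} (a : ℝ) (hx : IsC0 x) : IsC0 (a • x) := by
  intro ε hε
  rcases eq_or_ne a 0 with rfl | ha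
  · have hsub : {γ | ε ≤ |((0:ℝ) • x) γ|} ⊆ (∅ : Set Γ) := by
      intro γ hγ
      simp only [Set.mem_setOf_eq, Pi.smul_apply, zero_smul, abs_zero] at hγ
      linarith
    exact Set.finite_empty.subset hsub
  · refine (hx (ε / |a|) (div_pos hε (abs_pos.mpr ha))).subset fun γ hγ => ?_
    simp only [Set.mem_setOf_eq, Pi.smul_apply, smul_eq_mul, abs_mul] at hγ ⊢
    rw [div_le_iff₀ (abs_pos.mpr ha)]
    linarith

lemma isC0_add {x y : Γ → ℝ} (hx : IsC0 x) (hy : IsC0 y) : IsC0 (x + y) := by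
  intro ε hε
  refine ((hx (ε/2) (by linarith)).union (hy (ε/2) (by linarith))).subset fun γ hγ => ?_
  simp only [Set.mem_setOf_eq, Pi.add_apply] at hγ
  simp only [Set.mem_union, Set.mem_setOf_eq]
  by_contra h
  push_neg at h
  have := abs_add_le (x γ) (y γ)
  linarith [h.1, h.2]

lemma isC0_sub {x y : Γ → ℝ} (hx : IsC0 x) (hy : IsC0 y) : IsC0 (x - y) := by
  have : x - y = x + (-1 : ℝ) • y := by funext γ; simp; ring
  rw [this]; exact isC0_add hx (isC0_smul _ hy)

lemma bddAbove_abs_of_isC0 {x : Γ → ℝ} (hx : IsC0 x) :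
    BddAbove (Set.range fun γ => |x γ|) := by
  have hF := hx 1 one_pos
  refine ⟨1 + ∑ γ ∈ hF.toFinset, |x γ|, ?_⟩
  rintro r ⟨γ, rfl⟩
  have hsum : 0 ≤ ∑ γ ∈ hF.toFinset, |x γ| :=
    Finset.sum_nonneg fun _ _ => abs_nonneg _
  by_cases hγ : 1 ≤ |x γ|
  · have hmem : γ ∈ hF.toFinset := by simp [Set.Finite.mem_toFinset]; exact hγ
    have := Finset.single_le_sum (f := fun γ => |x γ|) (fun _ _ => abs_nonneg _) hmem
    linarith
  · push_neg at hγ; linarith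

lemma le_supNorm {x : Γ → ℝ} (hx : IsC0 x) (γ : Γ) : |x γ| ≤ supNorm x :=
  le_ciSup (bddAbove_abs_of_isC0 hx) γ

lemma isC0_eVec (γ : Γ) : IsC0 (eVec γ) := by
  apply isC0_of_finiteSupport
  refine (Set.finite_singleton γ).subset fun δ hδ => ?_
  simp only [Function.mem_support, eVec] at hδ
  by_contra h
  simp only [Set.mem_singleton_iff] at h
  exact hδ (if_neg h)

lemma isC0_indFinset (A : Finset Γ) : IsC0 (indFinset A) := by
  apply isC0_of_finiteSupport
  refine A.finite_toSet.subset fun γ hγ => ?_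
  simp only [Function.mem_support, indFinset] at hγ
  by_contra h
  simp only [Finset.mem_coe] at h
  exact hγ (if_neg h)

end Helpers

/-- Let `N` be an equivalent norm on `c₀(Γ)` that is solid, strictly monotone, and
normalized, let `L` be the supremum of `N` over indicators of nonempty finite sets.
If there are `α ∈ Γ` and `l > 1` such that `N (e_α + (1/L) e_β) ≥ l` for all `β ≠ α`,
then `N` fails the local diameter two property. -/
theorem strictlyMonotone_c0_fails_LD2P
    {Γ : Type*} [Nonempty Γ] (N : (Γ → ℝ) → ℝ)
    (hzero : ∀ x : Γ → ℝ, IsC0 x → (N x = 0 ↔ x = 0))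
    (hsmul : ∀ (a : ℝ) (x : Γ → ℝ), IsC0 x → N (a • x) = |a| * N x)
    (htri : ∀ x y : Γ → ℝ, IsC0 x → IsC0 y → N (x + y) ≤ N x + N y)
    (hequiv : ∃ c C : ℝ, 0 < c ∧ 0 < C ∧ ∀ x : Γ → ℝ, IsC0 x →
      c * supNorm x ≤ N x ∧ N x ≤ C * supNorm x)
    (hsolid : ∀ x y : Γ → ℝ, IsC0 x → IsC0 y → (∀ γ, |x γ| ≤ |y γ|) → N x ≤ N y)
    (hsm : ∀ x y : Γ → ℝ, IsC0 x → IsC0 y → (∀ γ, |y γ| ≤ |x γ|) →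
      (∃ β, |y β| < |x β|) → N y < N x)
    (hnormalized : ∀ γ : Γ, N (eVec γ) = 1)
    (L : ℝ)
    (hL : L = sSup {r : ℝ | ∃ A : Finset Γ, A.Nonempty ∧ r = N (indFinset A)})
    (α : Γ) (l : ℝ) (hl : 1 < l)
    (hinf : ∀ β : Γ, β ≠ α → l ≤ N (eVec α + (1 / L) • eVec β)) :
    ∃ f : (Γ → ℝ) →ₗ[ℝ] ℝ,
      sSup {r : ℝ | ∃ x : Γ → ℝ, IsC0 x ∧ N x ≤ 1 ∧ f x = r} = 1 ∧
      ∃ δ : ℝ, 0 < δ ∧ ∃ d : ℝ, d < 2 ∧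
        ∀ u v : Γ → ℝ, IsC0 u → IsC0 v → N u ≤ 1 → N v ≤ 1 →
          1 - δ < f u → 1 - δ < f v → N (u - v) ≤ d := by
  classical
  obtain ⟨c, C, hc, hC, hcC⟩ := hequiv
  -- indicator facts
  have hsupind : ∀ A : Finset Γ, supNorm (indFinset A) ≤ 1 := by
    intro A
    refine ciSup_le fun γ => ?_
    simp only [indFinset]
    split <;> simp
  have hSbdd : BddAbove {r : ℝ | ∃ A : Finset Γ, A.Nonempty ∧ r = N (indFinset A)} := by
    refine ⟨C, ?_⟩
    rintro r ⟨A, -, rfl⟩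
    calc N (indFinset A) ≤ C * supNorm (indFinset A) := (hcC _ (isC0_indFinset A)).2
      _ ≤ C * 1 := mul_le_mul_of_nonneg_left (hsupind A) hC.le
      _ = C := mul_one C
  have heα : indFinset ({α} : Finset Γ) = eVec α := by
    funext γ; simp [indFinset, eVec]
  have hL1 : 1 ≤ L := by
    rw [hL]
    refine le_csSup hSbdd ⟨{α}, Finset.singleton_nonempty α, ?_⟩
    rw [heα, hnormalized]
  have hL0 : (0:ℝ) < L := by linarith
  have hLS : ∀ A : Finset Γ, A.Nonempty → N (indFinset A) ≤ L := by
    intro A hA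
    rw [hL]
    exact le_csSup hSbdd ⟨A, hA, rfl⟩
  -- zero
  have hN0 : N (0 : Γ → ℝ) = 0 := by
    have := hsmul 0 0 (isC0_of_finiteSupport (by simp [Function.support_zero]))
    simpa using this
  -- key: N y ≤ L * supNorm y
  have hNL : ∀ y : Γ → ℝ, IsC0 y → N y ≤ L * supNorm y := by
    intro y hy
    have hs0 : 0 ≤ supNorm y :=
      le_trans (abs_nonneg _) (le_supNorm hy (Classical.arbitrary Γ))
    refine le_of_forall_pos_le_add fun ε hε => ?_
    set ε' := ε / C with hε'def
    have hε' : 0 < ε' := div_pos hε hC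
    have hF := hy ε' hε'
    set F := hF.toFinset with hFdef
    set y1 : Γ → ℝ := fun γ => if γ ∈ F then y γ else 0 with hy1def
    have hy1 : IsC0 y1 := by
      apply isC0_of_finiteSupport
      refine F.finite_toSet.subset fun γ hγ => ?_
      simp only [Function.mem_support, hy1def] at hγ
      by_contra h
      simp only [Finset.mem_coe] at h
      exact hγ (if_neg h)
    set y2 := y - y1 with hy2def
    have hy2 : IsC0 y2 := isC0_sub hy hy1
    have hsplit : y = y1 + y2 := by funext γ; simp [hy2def]
    have h2 : N y2 ≤ ε := by
      have hsup2 : supNorm y2 ≤ ε' := by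
        refine ciSup_le fun γ => ?_
        by_cases hγ : γ ∈ F
        · simp [hy2def, hy1def, hγ, hε'.le]
        · have : ¬ ε' ≤ |y γ| := by
            intro h; exact hγ (by simp [hFdef, Set.Finite.mem_toFinset]; exact h)
          push_neg at this
          simp only [hy2def, hy1def, Pi.sub_apply, if_neg hγ, sub_zero]
          linarith
      calc N y2 ≤ C * supNorm y2 := (hcC _ hy2).2
        _ ≤ C * ε' := mul_le_mul_of_nonneg_left hsup2 hC.le
        _ = ε := by rw [hε'def]; field_simp
    have h1 : N y1 ≤ L * supNorm y := by
      rcases Finset.eq_empty_or_nonempty F with hFe | hFne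
      · have : y1 = 0 := by funext γ; simp [hy1def, hFe]
        rw [this, hN0]
        exact mul_nonneg hL0.le hs0
      · have hcomp : ∀ γ, |y1 γ| ≤ |(supNorm y • indFinset F) γ| := by
          intro γ
          simp only [hy1def, Pi.smul_apply, smul_eq_mul, indFinset]
          by_cases hγ : γ ∈ F
          · simp only [if_pos hγ, mul_one]
            rw [abs_of_nonneg hs0]
            exact le_supNorm hy γ
          · simp [if_neg hγ]
        have := hsolid y1 (supNorm y • indFinset F) hy1
          (isC0_smul _ (isC0_indFinset F)) hcomp
        calc N y1 ≤ N (supNorm y • indFinset F) := this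
          _ = supNorm y * N (indFinset F) := by
              rw [hsmul _ _ (isC0_indFinset F), abs_of_nonneg hs0]
          _ ≤ supNorm y * L := mul_le_mul_of_nonneg_left (hLS F hFne) hs0
          _ = L * supNorm y := mul_comm _ _
    calc N y = N (y1 + y2) := by rw [← hsplit]
      _ ≤ N y1 + N y2 := htri _ _ hy1 hy2
      _ ≤ L * supNorm y + ε := add_le_add h1 h2
  -- coordinate bound
  have hcoord : ∀ x : Γ → ℝ, IsC0 x → N x ≤ 1 → |x α| ≤ 1 := by
    intro x hx hNx
    have hcomp : ∀ γ, |(x α • eVec α) γ| ≤ |x γ| := by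
      intro γ
      simp only [Pi.smul_apply, smul_eq_mul, eVec]
      rcases eq_or_ne γ α with rfl | h
      · simp
      · simp [h]
    have h := hsolid _ x (isC0_smul _ (isC0_eVec α)) hx hcomp
    rw [hsmul _ _ (isC0_eVec α), hnormalized, mul_one] at h
    linarith
  refine ⟨LinearMap.proj α, ?_, ?_⟩
  · -- sSup = 1
    have hmem : (1:ℝ) ∈ {r : ℝ | ∃ x : Γ → ℝ, IsC0 x ∧ N x ≤ 1 ∧ (LinearMap.proj α : (Γ → ℝ) →ₗ[ℝ] ℝ) x = r} := by
      refine ⟨eVec α, isC0_eVec α, (hnormalized α).le, ?_⟩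
      simp [LinearMap.proj_apply, eVec]
    have hub : ∀ r ∈ {r : ℝ | ∃ x : Γ → ℝ, IsC0 x ∧ N x ≤ 1 ∧ (LinearMap.proj α : (Γ → ℝ) →ₗ[ℝ] ℝ) x = r},
        r ≤ 1 := by
      rintro r ⟨x, hx, hNx, rfl⟩
      simp only [LinearMap.proj_apply]
      calc x α ≤ |x α| := le_abs_self _
        _ ≤ 1 := hcoord x hx hNx
    exact le_antisymm (csSup_le ⟨1, hmem⟩ hub) (le_csSup ⟨1, hub⟩ hmem)
  · set δ := (l - 1) / (2 * l) with hδdef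
    have hl0 : (0:ℝ) < l := by linarith
    have hδ0 : 0 < δ := by
      rw [hδdef]
      exact div_pos (by linarith) (by linarith)
    have hδ1 : δ < 1 := by
      rw [hδdef, div_lt_one (by linarith : (0:ℝ) < 2 * l)]
      linarith
    have hkey : 1 < (1 - δ) * l := by
      have : (1 - δ) * l = (l + 1) / 2 := by
        field_simp [hδdef]
        have h2 : δ * (2 * l) = l - 1 := by
          rw [hδdef]; exact div_mul_cancel₀ (l - 1) (by linarith : (0:ℝ) < 2 * l).ne'
        linarith
      rw [this]
      linarith
    refine ⟨δ, hδ0, 2 - δ, by linarith, ?_⟩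
    intro u v hu hv hNu hNv hfu hfv
    have hfu' : 1 - δ < u α := hfu
    have hfv' : 1 - δ < v α := hfv
    -- small coordinates off α
    have hsmall : ∀ x : Γ → ℝ, IsC0 x → N x ≤ 1 → 1 - δ < x α →
        ∀ β, β ≠ α → |x β| ≤ (1 - δ) / L := by
      intro x hx hNx hxα β hβ
      by_contra h
      push_neg at h
      set y : Γ → ℝ := (1 - δ) • (eVec α + (1/L) • eVec β) with hydef
      have hyC0 : IsC0 y := isC0_smul _ (isC0_add (isC0_eVec α) (isC0_smul _ (isC0_eVec β)))
      have hNy : (1 - δ) * l ≤ N y := by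
        rw [hydef, hsmul _ _ (isC0_add (isC0_eVec α) (isC0_smul _ (isC0_eVec β))),
          abs_of_nonneg (by linarith)]
        exact mul_le_mul_of_nonneg_left (hinf β hβ) (by linarith)
      have hcomp : ∀ γ, |y γ| ≤ |x γ| := by
        intro γ
        simp only [hydef, Pi.smul_apply, Pi.add_apply, smul_eq_mul, eVec]
        by_cases hγα : γ = α
        · have hne : ¬ γ = β := by rw [hγα]; exact Ne.symm hβ
          rw [if_pos hγα, if_neg hne]
          have heq : (1 - δ) * (1 + 1/L * 0) = 1 - δ := by ring
          rw [heq, abs_of_nonneg (by linarith)]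
          rw [hγα]
          calc 1 - δ ≤ x α := hxα.le
            _ ≤ |x α| := le_abs_self _
        · rw [if_neg hγα]
          by_cases hγβ : γ = β
          · rw [if_pos hγβ]
            have h1 : (1 - δ) * (0 + 1/L * 1) = (1 - δ) / L := by ring
            rw [h1, abs_of_nonneg (div_nonneg (by linarith) hL0.le), hγβ]
            exact h.le
          · rw [if_neg hγβ]
            simp
      have := hsolid y x hyC0 hx hcomp
      linarith
    -- coordinate at α: both in (1-δ, 1]
    have huα : u α ≤ 1 := le_trans (le_abs_self _) (hcoord u hu hNu)
    have hvα : v α ≤ 1 := le_trans (le_abs_self _) (hcoord v hv hNv)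
    -- decompose u - v
    set w : Γ → ℝ := fun γ => if γ = α then 0 else u γ - v γ with hwdef
    have hwC0 : IsC0 w := by
      intro ε hε
      refine ((isC0_sub hu hv) ε hε).subset fun γ hγ => ?_
      simp only [Set.mem_setOf_eq, hwdef] at hγ ⊢
      by_cases h : γ = α
      · rw [if_pos h] at hγ; simp at hγ; linarith
      · rw [if_neg h] at hγ; simpa using hγ
    have hdecomp : u - v = (u α - v α) • eVec α + w := by
      funext γ
      simp only [Pi.sub_apply, Pi.add_apply, Pi.smul_apply, smul_eq_mul, eVec, hwdef]
      rcases eq_or_ne γ α with rfl | h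
      · simp
      · simp [h]
    have hwsup : supNorm w ≤ 2 * (1 - δ) / L := by
      refine ciSup_le fun γ => ?_
      rcases eq_or_ne γ α with rfl | h
      · simp only [hwdef, if_pos rfl, abs_zero]
        have h0 : 0 ≤ 2 * (1 - δ) := by linarith
        exact div_nonneg h0 hL0.le
      · simp only [hwdef, if_neg h]
        have h1 := hsmall u hu hNu hfu' γ h
        have h2 := hsmall v hv hNv hfv' γ h
        calc |u γ - v γ| ≤ |u γ| + |v γ| := abs_sub _ _
          _ ≤ (1 - δ)/L + (1 - δ)/L := add_le_add h1 h2
          _ = 2 * (1 - δ) / L := by ring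
    have hNw : N w ≤ 2 * (1 - δ) := by
      calc N w ≤ L * supNorm w := hNL w hwC0
        _ ≤ L * (2 * (1 - δ) / L) := mul_le_mul_of_nonneg_left hwsup hL0.le
        _ = 2 * (1 - δ) := by field_simp
    have hNα : N ((u α - v α) • eVec α) ≤ δ := by
      rw [hsmul _ _ (isC0_eVec α), hnormalized, mul_one]
      rw [abs_le]
      constructor <;> linarith
    calc N (u - v) = N ((u α - v α) • eVec α + w) := by rw [hdecomp]
      _ ≤ N ((u α - v α) • eVec α) + N w :=
          htri _ _ (isC0_smul _ (isC0_eVec α)) hwC0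
      _ ≤ δ + 2 * (1 - δ) := add_le_add hNα hNw
      _ = 2 - δ := by ring
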